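/- The function Φ satisfies the engulfing property: there exists a constant θ = θ(n,s) ≥ 1 such that for every (x,z) ∈ ℝ^{n+1}, every R > 0, and every (x₁,z₁) ∈ S_R(x,z), one has S_R(x,z) ⊂ S_{θR}(x₁,z₁). -/

import Mathlib

open Set MeasureTheory
open scoped ENNReal

noncomputable section

/-- `h(z) = (s²/(1-s))|z|^{1/s}`. -/
def hFun (s z : ℝ) : ℝ := s ^ 2 / (1 - s) * |z| ^ (1 / s)

/-- `h'(z) = (s/(1-s))|z|^{1/s-2} z` (with `h'(0)=0`). -/
def hDeriv (s z : ℝ) : ℝ := s / (1 - s) * |z| ^ (1 / s - 2) * z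

/-- Monge–Ampère quasi-distance of `h`. -/
def deltaH (s z₀ z : ℝ) : ℝ := hFun s z - hFun s z₀ - hDeriv s z₀ * (z - z₀)

/-- Monge–Ampère quasi-distance of `φ(x)=|x|²/2` on `ℝⁿ`. -/
def deltaE (n : ℕ) (x₀ x : Fin n → ℝ) : ℝ := (∑ i, (x i - x₀ i) ^ 2) / 2

/-- Monge–Ampère quasi-distance of `Φ(x,z) = |x|²/2 + h(z)`. -/
def deltaPhi (n : ℕ) (s : ℝ) (p q : (Fin n → ℝ) × ℝ) : ℝ :=
  deltaE n p.1 q.1 + deltaH s p.2 q.2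

/-- Monge–Ampère section of `Φ` of radius `R` centered at `p`. -/
def sectPhi (n : ℕ) (s R : ℝ) (p : (Fin n → ℝ) × ℝ) : Set ((Fin n → ℝ) × ℝ) :=
  {q | deltaPhi n s p q < R}

/-- Monge–Ampère section of `h` of radius `R` centered at `z₀`. -/
def sectH (s R z₀ : ℝ) : Set ℝ := {z | deltaH s z₀ z < R}

/-- One-dimensional section of `t ↦ t²/2` of radius `R` centered at `t₀`. -/
def sect1 (R t₀ : ℝ) : Set ℝ := {t | (t - t₀) ^ 2 / 2 < R}

/-- Monge–Ampère cube of radius `R` centered at `p`. -/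
def cube (n : ℕ) (s R : ℝ) (p : (Fin n → ℝ) × ℝ) : Set ((Fin n → ℝ) × ℝ) :=
  {q | (∀ i, q.1 i ∈ sect1 R (p.1 i)) ∧ q.2 ∈ sectH s R p.2}

/-- Monge–Ampère measure of `Φ`: `μ_Φ(E) = ∫_E |z|^{1/s-2} dz dx`. -/
def muPhi (n : ℕ) (s : ℝ) (E : Set ((Fin n → ℝ) × ℝ)) : ℝ≥0∞ :=
  ∫⁻ p in E, ENNReal.ofReal (|p.2| ^ (1 / s - 2))

/-- Monge–Ampère measure of `h`: `μ_h(I) = ∫_I |z|^{1/s-2} dz`. -/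
def muH (s : ℝ) (I : Set ℝ) : ℝ≥0∞ :=
  ∫⁻ z in I, ENNReal.ofReal (|z| ^ (1 / s - 2))

/-- Second partial derivative `∂_{ij}` in the `x`-variables. -/
def Dxx (n : ℕ) (U : (Fin n → ℝ) × ℝ → ℝ) (i j : Fin n) (p : (Fin n → ℝ) × ℝ) : ℝ :=
  fderiv ℝ (fun y : Fin n → ℝ =>
    fderiv ℝ (fun y' : Fin n → ℝ => U (y', p.2)) y (Pi.single j 1)) p.1 (Pi.single i 1)

/-- Second partial derivative `∂_{zz}`. -/
def Dzz (n : ℕ) (U : (Fin n → ℝ) × ℝ → ℝ) (p : (Fin n → ℝ) × ℝ) : ℝ :=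
  deriv (fun w => deriv (fun w' => U (p.1, w')) w) p.2

/-- The extension operator `a^{ij}(x) ∂_{ij} + |z|^{2-1/s} ∂_{zz}`. -/
def extOp (n : ℕ) (s : ℝ) (A : (Fin n → ℝ) → Fin n → Fin n → ℝ)
    (U : (Fin n → ℝ) × ℝ → ℝ) (p : (Fin n → ℝ) × ℝ) : ℝ :=
  (∑ i, ∑ j, A p.1 i j * Dxx n U i j p) + |p.2| ^ (2 - 1 / s) * Dzz n U p

/-- Bounded measurable, symmetric, uniformly elliptic coefficients on `Ω`. -/
def UniformlyElliptic (n : ℕ) (lam Lam : ℝ) (Ω : Set (Fin n → ℝ))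
    (A : (Fin n → ℝ) → Fin n → Fin n → ℝ) : Prop :=
  (∀ i j, Measurable fun x => A x i j) ∧
  (∀ x i j, A x i j = A x j i) ∧
  (∀ x ∈ Ω, ∀ ξ : Fin n → ℝ,
    lam * ∑ i, ξ i ^ 2 ≤ ∑ i, ∑ j, A x i j * ξ i * ξ j ∧
    (∑ i, ∑ j, A x i j * ξ i * ξ j) ≤ Lam * ∑ i, ξ i ^ 2)

/-- A paraboloid of opening `a > 0` with vertex `v`. -/
def IsParaboloid (n : ℕ) (s a : ℝ) (v : (Fin n → ℝ) × ℝ) (P : (Fin n → ℝ) × ℝ → ℝ) : Prop :=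
  ∃ c : ℝ, ∀ p, P p = -a * deltaPhi n s v p + c

/-- `P` touches `U` from below at `p₀` in the set `S`. -/
def TouchesBelow (n : ℕ) (P U : (Fin n → ℝ) × ℝ → ℝ)
    (S : Set ((Fin n → ℝ) × ℝ)) (p₀ : (Fin n → ℝ) × ℝ) : Prop :=
  P p₀ = U p₀ ∧ ∀ p ∈ S, P p ≤ U p


namespace PhiEngulf

/-! ### Auxiliary one-dimensional theory for `h(z) = c |z|^p`, `p > 1`. -/

/-- signed power `spow γ u = sgn(u)|u|^γ` (written as `|u|^(γ-1) * u`). -/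
def spow (γ u : ℝ) : ℝ := |u| ^ (γ - 1) * u

/-- normalized Monge–Ampère quasi-distance of `|z|^p`. -/
def dtil (p w z : ℝ) : ℝ := |z| ^ p - |w| ^ p - p * spow (p - 1) w * (z - w)

def Fc (p z : ℝ) : ℝ := z ^ p + (p - 1) - p * z
def Gc (p z : ℝ) : ℝ := (z ^ (p / 2) - 1) ^ 2
def aP (p : ℝ) : ℝ := (p - 1) / (2 * p)
def mP (p : ℝ) : ℝ := min (aP p ^ (p / 2 - 1)) 1
def MP (p : ℝ) : ℝ := max (aP p ^ (p / 2 - 1)) 1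
def C3 (p : ℝ) : ℝ := max 1 ((p - 1) / (p / 2)) / mP p
def K3 (p : ℝ) : ℝ := MP p * max 1 ((p / 2) / (p - 1))
def K4 (p : ℝ) : ℝ := 1 + max 0 (2 - p) / (2 * (p - 1))

lemma bern {r u : ℝ} (hr : 1 ≤ r) (hu : 0 ≤ u) : 1 + r * (u - 1) ≤ u ^ r := by
  have h := one_add_mul_self_le_rpow_one_add (by linarith : (-1:ℝ) ≤ u - 1) hr
  simpa using h

lemma one_sub_rpow_le {γ δ z : ℝ} (hδ : 0 < δ) (hz0 : 0 < z) (hz1 : z ≤ 1) :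
    1 - z ^ γ ≤ max 1 (γ / δ) * (1 - z ^ δ) := by
  have hzδ1 : z ^ δ ≤ 1 := Real.rpow_le_one hz0.le hz1 hδ.le
  rcases le_or_gt γ δ with h | h
  · have h1 : z ^ δ ≤ z ^ γ := Real.rpow_le_rpow_of_exponent_ge hz0 hz1 h
    have : (1:ℝ) ≤ max 1 (γ / δ) := le_max_left _ _
    nlinarith
  · have hr : 1 ≤ γ / δ := (one_le_div hδ).2 h.le
    have hb : 1 + (γ / δ) * (z ^ δ - 1) ≤ (z ^ δ) ^ (γ / δ) :=
      bern hr (Real.rpow_nonneg hz0.le δ)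
    have he : (z ^ δ) ^ (γ / δ) = z ^ γ := by
      rw [← Real.rpow_mul hz0.le]
      congr 1
      field_simp
    rw [he] at hb
    have : γ / δ ≤ max 1 (γ / δ) := le_max_right _ _
    nlinarith [Real.rpow_nonneg hz0.le δ, sub_nonneg.2 hzδ1]

lemma hasDerivAt_Fc {p z : ℝ} (hz : z ≠ 0) : HasDerivAt (Fc p) (p * (z ^ (p - 1) - 1)) z := by
  have h1 : HasDerivAt (fun z : ℝ => z ^ p) (p * z ^ (p - 1)) z :=
    Real.hasDerivAt_rpow_const (Or.inl hz)
  have := ((h1.add_const (p - 1)).sub ((hasDerivAt_id z).const_mul p))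
  exact this.congr_deriv (by ring)

lemma hasDerivAt_Gc {p z : ℝ} (hz : 0 < z) :
    HasDerivAt (Gc p) (p * (z ^ (p - 1) - z ^ (p / 2 - 1))) z := by
  have h1 : HasDerivAt (fun z : ℝ => z ^ (p / 2) - 1) (p / 2 * z ^ (p / 2 - 1)) z :=
    (Real.hasDerivAt_rpow_const (Or.inl hz.ne')).sub_const 1
  have h2 := h1.pow 2
  have he : z ^ (p / 2) * z ^ (p / 2 - 1) = z ^ (p - 1) := by
    rw [← Real.rpow_add hz]; ring_nf
  refine h2.congr_deriv ?_
  push_cast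
  rw [pow_one]
  linear_combination p * he

/-- If `F 1 = 0` and `F' ≥ 0` on `(1,∞)` then `F ≥ 0` on `[1,∞)`. -/
lemma nonneg_on_Ici {F F' : ℝ → ℝ} (hF : ∀ z : ℝ, 0 < z → HasDerivAt F (F' z) z)
    (hF1 : F 1 = 0) (hF' : ∀ z : ℝ, 1 < z → 0 ≤ F' z) : ∀ z : ℝ, 1 ≤ z → 0 ≤ F z := by
  have hmono : MonotoneOn F (Set.Ici (1:ℝ)) := by
    apply monotoneOn_of_deriv_nonneg (convex_Ici 1)
    · intro z hz
      exact ((hF z (by simp at hz; linarith)).continuousAt).continuousWithinAt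
    · intro z hz
      rw [interior_Ici] at hz
      exact ((hF z (by simp at hz; linarith)).differentiableAt).differentiableWithinAt
    · intro z hz
      rw [interior_Ici] at hz
      simp only [Set.mem_Ioi] at hz
      rw [(hF z (by linarith)).deriv]
      exact hF' z hz
  intro z hz
  have := hmono (Set.self_mem_Ici) (Set.mem_Ici.2 hz) hz
  linarith

/-- If `F 1 = 0` and `F' ≤ 0` on `(a,1)` then `F ≥ 0` on `[a,1]` (for `0 < a < 1`). -/
lemma nonneg_on_Icc {a : ℝ} (ha : 0 < a) (ha1 : a < 1) {F F' : ℝ → ℝ}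
    (hF : ∀ z : ℝ, 0 < z → HasDerivAt F (F' z) z)
    (hF1 : F 1 = 0) (hF' : ∀ z : ℝ, a < z → z < 1 → F' z ≤ 0) :
    ∀ z : ℝ, a ≤ z → z ≤ 1 → 0 ≤ F z := by
  have hanti : AntitoneOn F (Set.Icc a 1) := by
    apply antitoneOn_of_deriv_nonpos (convex_Icc a 1)
    · intro z hz
      exact ((hF z (lt_of_lt_of_le ha hz.1)).continuousAt).continuousWithinAt
    · intro z hz
      rw [interior_Icc] at hz
      exact ((hF z (lt_trans ha hz.1)).differentiableAt).differentiableWithinAt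
    · intro z hz
      rw [interior_Icc] at hz
      rw [(hF z (lt_trans ha hz.1)).deriv]
      exact hF' z hz.1 hz.2
  intro z hz hz1
  have := hanti (Set.mem_Icc.2 ⟨hz, hz1⟩) (Set.mem_Icc.2 ⟨ha1.le, le_rfl⟩) hz1
  linarith

lemma one_le_K4 {p : ℝ} (hp : 1 < p) : 1 ≤ K4 p := by
  have h0 : (0:ℝ) ≤ max 0 (2 - p) := le_max_left _ _
  have : 0 ≤ max 0 (2 - p) / (2 * (p - 1)) := div_nonneg h0 (by linarith)
  unfold K4; linarith

lemma derivIneq4_upper {p z : ℝ} (hp : 1 < p) (hz : 1 ≤ z) :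
    z ^ (p - 1) - 1 ≤ 2 * (z ^ (p - 1) - z ^ (p / 2 - 1)) := by
  have hz0 : (0:ℝ) < z := by linarith
  have he : z ^ (p / 2) * z ^ (p / 2 - 1) = z ^ (p - 1) := by
    rw [← Real.rpow_add hz0]; ring_nf
  rcases le_or_gt 2 p with h2 | h2
  · have h1 : z ^ (p / 2 - 1) ≤ z ^ (p / 2) :=
      Real.rpow_le_rpow_of_exponent_le hz (by linarith)
    have h2' : (1:ℝ) ≤ z ^ (p / 2 - 1) := Real.one_le_rpow hz (by linarith)
    have h3 : (1:ℝ) ≤ z ^ (p / 2) := Real.one_le_rpow hz (by linarith)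
    nlinarith
  · have h2' : z ^ (p / 2 - 1) ≤ 1 :=
      Real.rpow_le_one_of_one_le_of_nonpos hz (by linarith)
    have h3 : (1:ℝ) ≤ z ^ (p - 1) := Real.one_le_rpow hz (by linarith)
    linarith

lemma derivIneq4_lower {p z : ℝ} (hp : 1 < p) (hz : 1 ≤ z) :
    z ^ (p - 1) - z ^ (p / 2 - 1) ≤ K4 p * (z ^ (p - 1) - 1) := by
  have hz0 : (0:ℝ) < z := by linarith
  have hA : (1:ℝ) ≤ z ^ (p - 1) := Real.one_le_rpow hz (by linarith)
  rcases le_or_gt 2 p with h2 | h2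
  · have hmax : max 0 (2 - p) = 0 := max_eq_left (by linarith)
    have h2' : (1:ℝ) ≤ z ^ (p / 2 - 1) := Real.one_le_rpow hz (by linarith)
    unfold K4; rw [hmax]; norm_num; linarith
  · set x := Real.log z with hxdef
    have hx : 0 ≤ x := Real.log_nonneg hz
    have e1 : z ^ (p / 2 - 1) = Real.exp (x * (p / 2 - 1)) := by
      rw [Real.rpow_def_of_pos hz0]
    have e2 : z ^ (p - 1) = Real.exp (x * (p - 1)) := by
      rw [Real.rpow_def_of_pos hz0]
    have b1 : x * (p / 2 - 1) + 1 ≤ Real.exp (x * (p / 2 - 1)) := Real.add_one_le_exp _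
    have b2 : x * (p - 1) + 1 ≤ Real.exp (x * (p - 1)) := Real.add_one_le_exp _
    have hBA : z ^ (p - 1) - z ^ (p / 2 - 1) - (z ^ (p-1) - 1) ≤ (1 - p/2) * x := by
      rw [e1]; nlinarith
    have hAx : (p - 1) * x ≤ z ^ (p - 1) - 1 := by rw [e2]; nlinarith
    have hmax : max 0 (2 - p) = 2 - p := max_eq_right (by linarith)
    have hK : K4 p = 1 + (2 - p) / (2 * (p - 1)) := by unfold K4; rw [hmax]
    rw [hK]
    have hc : 0 ≤ (2 - p) / (2 * (p - 1)) := div_nonneg (by linarith) (by linarith)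
    have key : (1 - p/2) * x ≤ (2 - p) / (2 * (p - 1)) * (z ^ (p - 1) - 1) := by
      have := mul_le_mul_of_nonneg_left hAx hc
      have heq : (2 - p) / (2 * (p - 1)) * ((p - 1) * x) = (1 - p/2) * x := by
        rw [div_mul_eq_mul_div, div_eq_iff (by nlinarith : 2 * (p - 1) ≠ 0)]; ring
      linarith [heq ▸ this]
    linarith

lemma aP_pos {p : ℝ} (hp : 1 < p) : 0 < aP p := div_pos (by linarith) (by linarith)

lemma aP_lt_one {p : ℝ} (hp : 1 < p) : aP p < 1 := by
  rw [aP, div_lt_one (by linarith)]; linarith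

lemma mP_pos {p : ℝ} (hp : 1 < p) : 0 < mP p :=
  lt_min (Real.rpow_pos_of_pos (aP_pos hp) _) one_pos

lemma zpow_bounds {p z : ℝ} (hp : 1 < p) (hz1 : aP p ≤ z) (hz2 : z ≤ 1) :
    mP p ≤ z ^ (p / 2 - 1) ∧ z ^ (p / 2 - 1) ≤ MP p := by
  have ha := aP_pos hp
  have hz0 : 0 < z := lt_of_lt_of_le ha hz1
  rcases le_or_gt 2 p with h2 | h2
  · constructor
    · exact le_trans (min_le_left _ _) (Real.rpow_le_rpow ha.le hz1 (by linarith))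
    · exact le_trans (Real.rpow_le_one hz0.le hz2 (by linarith)) (le_max_right _ _)
  · constructor
    · refine le_trans (min_le_right _ _) ?_
      exact Real.one_le_rpow_of_pos_of_le_one_of_nonpos hz0 hz2 (by linarith)
    · refine le_trans (Real.rpow_le_rpow_of_nonpos ha hz1 (by linarith)) (le_max_left _ _)

lemma derivIneq3_upper {p z : ℝ} (hp : 1 < p) (hz1 : aP p ≤ z) (hz2 : z ≤ 1) :
    1 - z ^ (p - 1) ≤ C3 p * (z ^ (p / 2 - 1) - z ^ (p - 1)) := by
  have hz0 : 0 < z := lt_of_lt_of_le (aP_pos hp) hz1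
  have he : z ^ (p / 2 - 1) * z ^ (p / 2) = z ^ (p - 1) := by
    rw [← Real.rpow_add hz0]; ring_nf
  have h1 : 1 - z ^ (p - 1) ≤ max 1 ((p - 1) / (p / 2)) * (1 - z ^ (p / 2)) :=
    one_sub_rpow_le (by linarith) hz0 hz2
  obtain ⟨hm, _⟩ := zpow_bounds hp hz1 hz2
  have hm0 := mP_pos hp
  have hG0 : 0 ≤ 1 - z ^ (p / 2) := by
    have := Real.rpow_le_one hz0.le hz2 (by linarith : (0:ℝ) ≤ p / 2); linarith
  have hC3 : C3 p * mP p = max 1 ((p - 1) / (p / 2)) := div_mul_cancel₀ _ hm0.ne'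
  have h2 : max 1 ((p - 1) / (p / 2)) * (1 - z ^ (p / 2))
      ≤ C3 p * (z ^ (p / 2 - 1) * (1 - z ^ (p / 2))) := by
    have hC3nn : 0 ≤ C3 p := div_nonneg (le_trans zero_le_one (le_max_left _ _)) hm0.le
    nlinarith [mul_le_mul_of_nonneg_right hm hG0]
  calc 1 - z ^ (p - 1) ≤ max 1 ((p - 1) / (p / 2)) * (1 - z ^ (p / 2)) := h1
    _ ≤ C3 p * (z ^ (p / 2 - 1) * (1 - z ^ (p / 2))) := h2
    _ = C3 p * (z ^ (p / 2 - 1) - z ^ (p - 1)) := by rw [mul_sub, mul_one, he]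

lemma derivIneq3_lower {p z : ℝ} (hp : 1 < p) (hz1 : aP p ≤ z) (hz2 : z ≤ 1) :
    z ^ (p / 2 - 1) - z ^ (p - 1) ≤ K3 p * (1 - z ^ (p - 1)) := by
  have hz0 : 0 < z := lt_of_lt_of_le (aP_pos hp) hz1
  have he : z ^ (p / 2 - 1) * z ^ (p / 2) = z ^ (p - 1) := by
    rw [← Real.rpow_add hz0]; ring_nf
  obtain ⟨_, hM⟩ := zpow_bounds hp hz1 hz2
  have hG0 : 0 ≤ 1 - z ^ (p / 2) := by
    have := Real.rpow_le_one hz0.le hz2 (by linarith : (0:ℝ) ≤ p / 2); linarith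
  have h1 : 1 - z ^ (p / 2) ≤ max 1 ((p / 2) / (p - 1)) * (1 - z ^ (p - 1)) :=
    one_sub_rpow_le (by linarith) hz0 hz2
  have hMnn : (0:ℝ) ≤ MP p := le_trans zero_le_one (le_max_right _ _)
  have step : z ^ (p / 2 - 1) - z ^ (p - 1) = z ^ (p / 2 - 1) * (1 - z ^ (p / 2)) := by
    rw [mul_sub, mul_one, he]
  rw [step, K3]
  calc z ^ (p / 2 - 1) * (1 - z ^ (p / 2)) ≤ MP p * (1 - z ^ (p / 2)) :=
        mul_le_mul_of_nonneg_right hM hG0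
    _ ≤ MP p * (max 1 ((p / 2) / (p - 1)) * (1 - z ^ (p - 1))) :=
        mul_le_mul_of_nonneg_left h1 hMnn
    _ = MP p * max 1 (p / 2 / (p - 1)) * (1 - z ^ (p - 1)) := by ring

lemma Fc_one (p : ℝ) : Fc p 1 = 0 := by simp [Fc]

lemma Gc_one (p : ℝ) : Gc p 1 = 0 := by simp [Gc]

lemma dtil_one_pos {p z : ℝ} (hz : 0 < z) : dtil p 1 z = Fc p z := by
  simp [dtil, spow, Fc, abs_of_pos hz]
  ring

lemma spow_pos {γ z : ℝ} (hz : 0 < z) : spow γ z = z ^ γ := by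
  rw [spow, abs_of_pos hz, ← Real.rpow_add_one hz.ne']
  ring_nf

lemma sq_spow {p z : ℝ} (hp : p ≠ 0) : (spow (p/2) z) ^ 2 = |z| ^ p := by
  rcases eq_or_ne z 0 with rfl | hz
  · simp [spow, Real.zero_rpow hp]
  · have habs : (0:ℝ) < |z| := abs_pos.2 hz
    rw [spow, mul_pow, ← Real.rpow_natCast (|z| ^ (p/2 - 1)) 2, ← Real.rpow_mul (abs_nonneg z),
      ← sq_abs z, ← Real.rpow_two, ← Real.rpow_add habs]
    norm_num
    congr 1
    ring

/-- Case `z ≤ 0`. -/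
lemma case1 {p z : ℝ} (hp : 1 < p) (hz : z ≤ 0) :
    dtil p 1 z ≤ 2 * p * (spow (p/2) z - 1) ^ 2 ∧
      min 1 (p - 1) * (spow (p/2) z - 1) ^ 2 ≤ 2 * dtil p 1 z := by
  have hp0 : p ≠ 0 := by linarith
  have hd : dtil p 1 z = |z| ^ p - 1 - p * (z - 1) := by
    simp [dtil, spow]
  set A := |z| ^ p with hA
  set B := |z| ^ (p/2) with hB
  have hB2 : B ^ 2 = A := by
    rw [hB, ← Real.rpow_natCast (|z| ^ (p/2)) 2, ← Real.rpow_mul (abs_nonneg z)]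
    norm_num
    exact hA.symm
  have hsp : spow (p/2) z = -B := by
    rcases eq_or_lt_of_le hz with rfl | hzlt
    · simp [spow, hB, Real.zero_rpow (by intro h; apply hp0; linarith [h] : p/2 ≠ 0)]
    · have habs : (0:ℝ) < |z| := abs_pos.2 hzlt.ne
      rw [spow, hB]
      have key : |z| ^ (p/2 - 1) * |z| = |z| ^ (p/2) := by
        rw [← Real.rpow_add_one habs.ne']; ring_nf
      have hzz : |z| = -z := abs_of_neg hzlt
      linear_combination (-1) * key + |z| ^ (p/2 - 1) * hzz
  have hA0 : 0 ≤ A := Real.rpow_nonneg (abs_nonneg z) p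
  have hB0 : 0 ≤ B := Real.rpow_nonneg (abs_nonneg z) _
  have hzabs : -z = |z| := (abs_of_nonpos hz).symm
  have habsle : |z| ≤ 1 + A := by
    rcases le_or_gt (|z|) 1 with h | h
    · linarith
    · have : |z| ^ (1:ℝ) ≤ |z| ^ p := Real.rpow_le_rpow_of_exponent_le h.le (by linarith)
      rw [Real.rpow_one] at this
      linarith
  have hc1 : min 1 (p-1) ≤ 1 := min_le_left _ _
  have hc2 : min 1 (p-1) ≤ p - 1 := min_le_right _ _
  have hc0 : 0 < min 1 (p-1) := lt_min one_pos (by linarith)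
  constructor
  · rw [hd, hsp]
    have h1 : (-B - 1)^2 = A + 2*B + 1 := by nlinarith
    nlinarith
  · rw [hd, hsp]
    have h1 : (-B - 1)^2 = A + 2*B + 1 := by nlinarith
    have h2 : 2*B ≤ A + 1 := by nlinarith [sq_nonneg (B - 1)]
    nlinarith

/-- Case `0 ≤ z ≤ aP p`. -/
lemma case2 {p z : ℝ} (hp : 1 < p) (hz0 : 0 ≤ z) (hz1 : z ≤ aP p) :
    Fc p z ≤ (p / (1 - aP p ^ (p/2))^2) * Gc p z ∧ Gc p z ≤ (2/(p-1)) * Fc p z := by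
  have hap : 0 < aP p := aP_pos hp
  have hap1 : aP p < 1 := aP_lt_one hp
  have hzle1 : z ≤ 1 := le_trans hz1 hap1.le
  have hzp1 : z ^ p ≤ 1 := Real.rpow_le_one hz0 hzle1 (by linarith)
  have hzpnn : 0 ≤ z ^ p := Real.rpow_nonneg hz0 p
  have hpa : p * aP p = (p-1)/2 := by
    rw [aP]; field_simp
  have hFl : (p-1)/2 ≤ Fc p z := by
    have : p * z ≤ p * aP p := mul_le_mul_of_nonneg_left hz1 (by linarith)
    rw [Fc]; rw [hpa] at this; linarith
  have hFu : Fc p z ≤ p := by rw [Fc]; nlinarith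
  have ht : 0 ≤ z ^ (p/2) := Real.rpow_nonneg hz0 _
  have ht1 : z ^ (p/2) ≤ aP p ^ (p/2) := Real.rpow_le_rpow hz0 hz1 (by linarith)
  have ht0 : aP p ^ (p/2) < 1 := Real.rpow_lt_one hap.le hap1 (by linarith)
  have hGu : Gc p z ≤ 1 := by
    rw [Gc]; nlinarith [le_trans ht1 ht0.le]
  have hGl : (1 - aP p ^ (p/2))^2 ≤ Gc p z := by
    rw [Gc]; nlinarith
  have hg0 : 0 < (1 - aP p ^ (p/2))^2 := by nlinarith
  constructor
  · calc Fc p z ≤ p := hFu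
      _ = (p / (1 - aP p ^ (p/2))^2) * (1 - aP p ^ (p/2))^2 := by
          rw [div_mul_cancel₀ _ hg0.ne']
      _ ≤ (p / (1 - aP p ^ (p/2))^2) * Gc p z := by
          apply mul_le_mul_of_nonneg_left hGl (div_nonneg (by linarith) hg0.le)
  · have hne : p - 1 ≠ 0 := by linarith
    calc Gc p z ≤ 1 := hGu
      _ = (2/(p-1)) * ((p-1)/2) := by field_simp
      _ ≤ (2/(p-1)) * Fc p z := by
          apply mul_le_mul_of_nonneg_left hFl (div_nonneg (by norm_num) (by linarith))

/-- Case `aP p ≤ z ≤ 1`. -/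
lemma case3 {p z : ℝ} (hp : 1 < p) (hz1 : aP p ≤ z) (hz2 : z ≤ 1) :
    Fc p z ≤ C3 p * Gc p z ∧ Gc p z ≤ K3 p * Fc p z := by
  have hp0 : (0:ℝ) < p := by linarith
  constructor
  · have key := nonneg_on_Icc (aP_pos hp) (aP_lt_one hp)
      (F := fun z => C3 p * Gc p z - Fc p z)
      (F' := fun z => C3 p * (p * (z ^ (p-1) - z ^ (p/2-1))) - p * (z ^ (p-1) - 1))
      (fun z hz => ((hasDerivAt_Gc hz).const_mul (C3 p)).sub (hasDerivAt_Fc hz.ne'))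
      (by rw [Fc_one, Gc_one]; ring)
      (fun z ha hb => by
        have h := derivIneq3_upper hp ha.le hb.le
        nlinarith [mul_le_mul_of_nonneg_left h hp0.le])
    have := key z hz1 hz2
    linarith
  · have key := nonneg_on_Icc (aP_pos hp) (aP_lt_one hp)
      (F := fun z => K3 p * Fc p z - Gc p z)
      (F' := fun z => K3 p * (p * (z ^ (p-1) - 1)) - p * (z ^ (p-1) - z ^ (p/2-1)))
      (fun z hz => ((hasDerivAt_Fc hz.ne').const_mul (K3 p)).sub (hasDerivAt_Gc hz))
      (by rw [Fc_one, Gc_one]; ring)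
      (fun z ha hb => by
        have h := derivIneq3_lower hp ha.le hb.le
        nlinarith [mul_le_mul_of_nonneg_left h hp0.le])
    have := key z hz1 hz2
    linarith

/-- Case `1 ≤ z`. -/
lemma case4 {p z : ℝ} (hp : 1 < p) (hz : 1 ≤ z) :
    Fc p z ≤ 2 * Gc p z ∧ Gc p z ≤ K4 p * Fc p z := by
  have hp0 : (0:ℝ) < p := by linarith
  constructor
  · have key := nonneg_on_Ici
      (F := fun z => 2 * Gc p z - Fc p z)
      (F' := fun z => 2 * (p * (z ^ (p-1) - z ^ (p/2-1))) - p * (z ^ (p-1) - 1))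
      (fun z hz => ((hasDerivAt_Gc hz).const_mul 2).sub (hasDerivAt_Fc hz.ne'))
      (by rw [Fc_one, Gc_one]; ring)
      (fun z hz => by
        have h := derivIneq4_upper hp hz.le
        nlinarith [mul_le_mul_of_nonneg_left h hp0.le])
    have := key z hz
    linarith
  · have key := nonneg_on_Ici
      (F := fun z => K4 p * Fc p z - Gc p z)
      (F' := fun z => K4 p * (p * (z ^ (p-1) - 1)) - p * (z ^ (p-1) - z ^ (p/2-1)))
      (fun z hz => ((hasDerivAt_Fc hz.ne').const_mul (K4 p)).sub (hasDerivAt_Gc hz))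
      (by rw [Fc_one, Gc_one]; ring)
      (fun z hz => by
        have h := derivIneq4_lower hp hz.le
        nlinarith [mul_le_mul_of_nonneg_left h hp0.le])
    have := key z hz
    linarith

/-- Core two-sided comparison at `w = 1`. -/
lemma core {p : ℝ} (hp : 1 < p) : ∃ K : ℝ, 1 ≤ K ∧ ∀ z : ℝ,
    dtil p 1 z ≤ K * (spow (p/2) z - 1)^2 ∧ (spow (p/2) z - 1)^2 ≤ K * dtil p 1 z := by
  have hp0 : (0:ℝ) < p := by linarith
  have hap : 0 < aP p := aP_pos hp
  have hap1 : aP p < 1 := aP_lt_one hp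
  have ht0 : aP p ^ (p/2) < 1 := Real.rpow_lt_one hap.le hap1 (by linarith)
  have ht0' : 0 ≤ aP p ^ (p/2) := Real.rpow_nonneg hap.le _
  have hg0 : 0 < (1 - aP p ^ (p/2))^2 := by nlinarith
  have hmin : 0 < min 1 (p-1) := lt_min one_pos (by linarith)
  have c1l : (0:ℝ) < 2 / min 1 (p-1) := div_pos (by norm_num) hmin
  have c2u : (0:ℝ) ≤ p / (1 - aP p ^ (p/2))^2 := div_nonneg hp0.le hg0.le
  have c2l : (0:ℝ) < 2 / (p-1) := div_pos (by norm_num) (by linarith)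
  have c3u : (0:ℝ) ≤ C3 p := div_nonneg (le_trans zero_le_one (le_max_left _ _)) (mP_pos hp).le
  have c3l : (1:ℝ) ≤ K3 p := by
    have h1 : (1:ℝ) ≤ MP p := le_max_right _ _
    have h2 : (1:ℝ) ≤ max 1 ((p/2)/(p-1)) := le_max_left _ _
    rw [K3]; nlinarith
  have c4l : (1:ℝ) ≤ K4 p := one_le_K4 hp
  refine ⟨2*p + 2 / min 1 (p-1) + p / (1 - aP p ^ (p/2))^2 + 2/(p-1) + C3 p + K3 p
      + 2 + K4 p + 1, by linarith, fun z => ?_⟩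
  have glue : ∀ F G cu cl : ℝ, 0 ≤ G → 0 < cl → F ≤ cu * G → G ≤ cl * F →
      cu ≤ 2*p + 2 / min 1 (p-1) + p / (1 - aP p ^ (p/2))^2 + 2/(p-1) + C3 p + K3 p
        + 2 + K4 p + 1 →
      cl ≤ 2*p + 2 / min 1 (p-1) + p / (1 - aP p ^ (p/2))^2 + 2/(p-1) + C3 p + K3 p
        + 2 + K4 p + 1 →
      F ≤ (2*p + 2 / min 1 (p-1) + p / (1 - aP p ^ (p/2))^2 + 2/(p-1) + C3 p + K3 p
        + 2 + K4 p + 1) * G ∧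
      G ≤ (2*p + 2 / min 1 (p-1) + p / (1 - aP p ^ (p/2))^2 + 2/(p-1) + C3 p + K3 p
        + 2 + K4 p + 1) * F := by
    intro F G cu cl hG hcl hu hl hcuK hclK
    have hF : 0 ≤ F := by nlinarith
    constructor
    · nlinarith
    · nlinarith
  rcases le_or_gt z 0 with hz | hz
  · obtain ⟨h1, h2⟩ := case1 hp hz
    have hG : (0:ℝ) ≤ (spow (p/2) z - 1)^2 := sq_nonneg _
    refine glue _ _ (2*p) (2 / min 1 (p-1)) hG c1l h1 ?_ (by linarith) (by linarith)
    rw [div_mul_eq_mul_div, le_div_iff₀ hmin]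
    nlinarith
  · have hd : dtil p 1 z = Fc p z := dtil_one_pos hz
    have hG : (spow (p/2) z - 1)^2 = Gc p z := by rw [spow_pos hz, Gc]
    rw [hd, hG]
    have hGnn : (0:ℝ) ≤ Gc p z := sq_nonneg _
    rcases le_or_gt z (aP p) with hza | hza
    · obtain ⟨h1, h2⟩ := case2 hp hz.le hza
      exact glue _ _ _ _ hGnn c2l h1 h2 (by linarith) (by linarith)
    · rcases le_or_gt z 1 with hz1 | hz1
      · obtain ⟨h1, h2⟩ := case3 hp hza.le hz1
        exact glue _ _ _ _ hGnn (by linarith) h1 h2 (by linarith) (by linarith)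
      · obtain ⟨h1, h2⟩ := case4 hp hz1.le
        exact glue _ _ _ _ hGnn (by linarith) h1 h2 (by linarith) (by linarith)

lemma spow_scale {γ l u : ℝ} (hl : 0 < l) : spow γ (l * u) = l ^ γ * spow γ u := by
  have h : l ^ (γ - 1) * l = l ^ γ := by
    rw [← Real.rpow_add_one hl.ne']; ring_nf
  rw [spow, spow, abs_mul, abs_of_pos hl, Real.mul_rpow hl.le (abs_nonneg u)]
  linear_combination (|u| ^ (γ - 1) * u) * h

lemma abs_rpow_scale {e l u : ℝ} (hl : 0 < l) : |l * u| ^ e = l ^ e * |u| ^ e := by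
  rw [abs_mul, abs_of_pos hl, Real.mul_rpow hl.le (abs_nonneg u)]

lemma dtil_scale {p w z l : ℝ} (hl : 0 < l) :
    dtil p (l * w) (l * z) = l ^ p * dtil p w z := by
  have h4 : l ^ (p - 1) * l = l ^ p := by
    rw [← Real.rpow_add_one hl.ne']; ring_nf
  rw [dtil, dtil, abs_rpow_scale hl, abs_rpow_scale hl, spow_scale hl]
  linear_combination (-(p * spow (p - 1) w * (z - w))) * h4

lemma spow_neg (γ u : ℝ) : spow γ (-u) = - spow γ u := by
  rw [spow, spow, abs_neg]; ring

lemma dtil_neg (p w z : ℝ) : dtil p (-w) (-z) = dtil p w z := by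
  rw [dtil, dtil, abs_neg, abs_neg, spow_neg]; ring

lemma sq_rpow_half {p l : ℝ} (hl : 0 ≤ l) : (l ^ (p/2)) ^ 2 = l ^ p := by
  rw [← Real.rpow_natCast (l ^ (p/2)) 2, ← Real.rpow_mul hl]
  norm_num

/-- Two-sided comparison for all centers. -/
lemma twoSided {p : ℝ} (hp : 1 < p) : ∃ K : ℝ, 1 ≤ K ∧ ∀ w z : ℝ,
    dtil p w z ≤ K * (spow (p/2) z - spow (p/2) w)^2 ∧
      (spow (p/2) z - spow (p/2) w)^2 ≤ K * dtil p w z := by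
  obtain ⟨K, hK1, hK⟩ := core hp
  have hp0 : p ≠ 0 := by linarith
  refine ⟨K, hK1, fun w z => ?_⟩
  rcases eq_or_ne w 0 with rfl | hw
  · have h1 : dtil p 0 z = |z| ^ p := by
      simp [dtil, spow, Real.zero_rpow hp0]
    have h2 : (spow (p/2) z - spow (p/2) 0)^2 = |z| ^ p := by
      have : spow (p/2) 0 = 0 := by simp [spow]
      rw [this, sub_zero, sq_spow hp0]
    rw [h1, h2]
    have h3 : 0 ≤ |z| ^ p := Real.rpow_nonneg (abs_nonneg z) p
    constructor <;> nlinarith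
  · have hl : 0 < |w| := abs_pos.2 hw
    set l := |w| with hldef
    have hw' : w = l * (w / l) := by field_simp
    have hz' : z = l * (z / l) := by field_simp
    have hlp : 0 ≤ l ^ p := Real.rpow_nonneg hl.le p
    have key : ∀ u : ℝ, dtil p (w/l) u ≤ K * (spow (p/2) u - spow (p/2) (w/l))^2 ∧
        (spow (p/2) u - spow (p/2) (w/l))^2 ≤ K * dtil p (w/l) u := by
      intro u
      rcases abs_choice w with h | h
      · -- w = l, i.e. w/l = 1
        have : w / l = 1 := by rw [hldef, h]; field_simp
        rw [this]
        have hsp1 : spow (p/2) 1 = 1 := by simp [spow]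
        rw [hsp1]
        exact hK u
      · -- w/l = -1
        have hwl : w / l = -1 := by
          rw [hldef, h]
          field_simp
        rw [hwl]
        have e1 : dtil p (-1) u = dtil p 1 (-u) := by
          rw [← dtil_neg p 1 (-u), neg_neg]
        have e2 : (spow (p/2) u - spow (p/2) (-1))^2 = (spow (p/2) (-u) - 1)^2 := by
          rw [spow_neg, spow_neg]
          have : spow (p/2) 1 = 1 := by simp [spow]
          rw [this]
          ring
        rw [e1, e2]
        exact hK (-u)
    obtain ⟨k1, k2⟩ := key (z / l)
    have e3 : dtil p w z = l ^ p * dtil p (w/l) (z/l) := by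
      nth_rewrite 1 [hw', hz']
      exact dtil_scale hl
    have e4 : (spow (p/2) z - spow (p/2) w)^2
        = l ^ p * (spow (p/2) (z/l) - spow (p/2) (w/l))^2 := by
      nth_rewrite 1 [hw', hz']
      rw [spow_scale hl, spow_scale hl, ← mul_sub, mul_pow, sq_rpow_half hl.le]
    rw [e3, e4]
    constructor
    · calc l ^ p * dtil p (w/l) (z/l) ≤ l ^ p * (K * (spow (p/2) (z/l) - spow (p/2) (w/l))^2) :=
          mul_le_mul_of_nonneg_left k1 hlp
        _ = K * (l ^ p * (spow (p/2) (z/l) - spow (p/2) (w/l))^2) := by ring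
    · calc l ^ p * (spow (p/2) (z/l) - spow (p/2) (w/l))^2
          ≤ l ^ p * (K * dtil p (w/l) (z/l)) := mul_le_mul_of_nonneg_left k2 hlp
        _ = K * (l ^ p * dtil p (w/l) (z/l)) := by ring

/-- `dtil` is nonnegative and satisfies the engulfing-type quasi-triangle inequality. -/
lemma dtil_engulf {p : ℝ} (hp : 1 < p) : ∃ T : ℝ, 1 ≤ T ∧
    (∀ w z : ℝ, 0 ≤ dtil p w z) ∧
    (∀ z₀ z₁ z : ℝ, dtil p z₁ z ≤ T * (dtil p z₀ z₁ + dtil p z₀ z)) := by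
  obtain ⟨K, hK1, hK⟩ := twoSided hp
  have hK0 : 0 < K := lt_of_lt_of_le one_pos hK1
  have hnn : ∀ w z : ℝ, 0 ≤ dtil p w z := by
    intro w z
    have h := (hK w z).2
    nlinarith [sq_nonneg (spow (p/2) z - spow (p/2) w)]
  refine ⟨2 * K^2, by nlinarith, hnn, fun z₀ z₁ z => ?_⟩
  obtain ⟨h1, _⟩ := hK z₁ z
  obtain ⟨_, h01⟩ := hK z₀ z₁
  obtain ⟨_, h0z⟩ := hK z₀ z
  have htri : (spow (p/2) z - spow (p/2) z₁)^2
      ≤ 2 * ((spow (p/2) z - spow (p/2) z₀)^2 + (spow (p/2) z₀ - spow (p/2) z₁)^2) := by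
    nlinarith [sq_nonneg ((spow (p/2) z - spow (p/2) z₀) - (spow (p/2) z₀ - spow (p/2) z₁))]
  calc dtil p z₁ z ≤ K * (spow (p/2) z - spow (p/2) z₁)^2 := h1
    _ ≤ K * (2 * ((spow (p/2) z - spow (p/2) z₀)^2 + (spow (p/2) z₀ - spow (p/2) z₁)^2)) :=
        mul_le_mul_of_nonneg_left htri hK0.le
    _ ≤ K * (2 * (K * dtil p z₀ z + K * dtil p z₀ z₁)) := by
        have := mul_le_mul_of_nonneg_left (add_le_add h0z h01) (by positivity : (0:ℝ) ≤ 2 * K)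
        nlinarith
    _ = 2 * K^2 * (dtil p z₀ z₁ + dtil p z₀ z) := by ring

end PhiEngulf

namespace PhiEngulf

lemma deltaH_eq {s : ℝ} (hs0 : 0 < s) (hs1 : s < 1) (z₀ z : ℝ) :
    deltaH s z₀ z = (s^2/(1-s)) * dtil (1/s) z₀ z := by
  have hs : s ≠ 0 := hs0.ne'
  have h1s : (1:ℝ) - s ≠ 0 := by linarith
  rw [deltaH, hFun, hFun, hDeriv, dtil, spow, show 1/s - 1 - 1 = 1/s - 2 by ring]
  field_simp

lemma deltaE_nonneg (n : ℕ) (x y : Fin n → ℝ) : 0 ≤ deltaE n x y :=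
  div_nonneg (Finset.sum_nonneg fun i _ => sq_nonneg _) (by norm_num)

lemma deltaE_tri (n : ℕ) (p q r : Fin n → ℝ) :
    deltaE n q r ≤ 2 * (deltaE n p q + deltaE n p r) := by
  rw [deltaE, deltaE, deltaE]
  have hsum : ∑ i, (r i - q i)^2 ≤ ∑ i, (2*(q i - p i)^2 + 2*(r i - p i)^2) :=
    Finset.sum_le_sum (fun i _ => by nlinarith [sq_nonneg ((q i - p i) + (r i - p i))])
  rw [Finset.sum_add_distrib, ← Finset.mul_sum, ← Finset.mul_sum] at hsum
  linarith

end PhiEngulf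

/-- Corollary 4.5(2): `Φ` satisfies the engulfing property. -/
theorem phi_engulfing
    (n : ℕ) (hn : 1 ≤ n) (s : ℝ) (hs0 : 0 < s) (hs1 : s < 1) :
    ∃ θ : ℝ, 1 ≤ θ ∧
      ∀ (p : (Fin n → ℝ) × ℝ) (R : ℝ), 0 < R →
        ∀ q ∈ sectPhi n s R p, sectPhi n s R p ⊆ sectPhi n s (θ * R) q := by
  have hp : 1 < 1/s := by
    rw [lt_div_iff₀ hs0]; linarith
  have hc : 0 < s^2/(1-s) := div_pos (by positivity) (by linarith)
  obtain ⟨T, hT1, hTnn, hTtri⟩ := PhiEngulf.dtil_engulf hp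
  set M := max 2 T with hMdef
  have hM2 : (2:ℝ) ≤ M := le_max_left _ _
  have hTM : T ≤ M := le_max_right _ _
  have hM0 : (0:ℝ) < M := by linarith
  refine ⟨2 * M, by linarith, fun p R hR q hq r hr => ?_⟩
  rw [sectPhi, Set.mem_setOf_eq] at hq hr ⊢
  rw [deltaPhi] at hq hr ⊢
  -- nonnegativity
  have hHnn : ∀ a b : ℝ, 0 ≤ deltaH s a b := by
    intro a b
    rw [PhiEngulf.deltaH_eq hs0 hs1]
    exact mul_nonneg hc.le (hTnn a b)
  have hE1 : deltaE n q.1 r.1 ≤ 2 * (deltaE n p.1 q.1 + deltaE n p.1 r.1) :=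
    PhiEngulf.deltaE_tri n p.1 q.1 r.1
  have hH1 : deltaH s q.2 r.2 ≤ T * (deltaH s p.2 q.2 + deltaH s p.2 r.2) := by
    rw [PhiEngulf.deltaH_eq hs0 hs1, PhiEngulf.deltaH_eq hs0 hs1,
      PhiEngulf.deltaH_eq hs0 hs1]
    calc s^2/(1-s) * PhiEngulf.dtil (1/s) q.2 r.2
        ≤ s^2/(1-s) * (T * (PhiEngulf.dtil (1/s) p.2 q.2 + PhiEngulf.dtil (1/s) p.2 r.2)) :=
          mul_le_mul_of_nonneg_left (hTtri p.2 q.2 r.2) hc.le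
      _ = T * (s^2/(1-s) * PhiEngulf.dtil (1/s) p.2 q.2
            + s^2/(1-s) * PhiEngulf.dtil (1/s) p.2 r.2) := by ring
  have hEpq := PhiEngulf.deltaE_nonneg n p.1 q.1
  have hEpr := PhiEngulf.deltaE_nonneg n p.1 r.1
  have hHpq := hHnn p.2 q.2
  have hHpr := hHnn p.2 r.2
  have step : deltaE n q.1 r.1 + deltaH s q.2 r.2
      ≤ M * ((deltaE n p.1 q.1 + deltaH s p.2 q.2) + (deltaE n p.1 r.1 + deltaH s p.2 r.2)) := by
    nlinarith
  have final : M * ((deltaE n p.1 q.1 + deltaH s p.2 q.2)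
      + (deltaE n p.1 r.1 + deltaH s p.2 r.2)) < M * (R + R) := by
    apply mul_lt_mul_of_pos_left _ hM0
    linarith
  calc deltaE n q.1 r.1 + deltaH s q.2 r.2
      ≤ M * ((deltaE n p.1 q.1 + deltaH s p.2 q.2)
          + (deltaE n p.1 r.1 + deltaH s p.2 r.2)) := step
    _ < M * (R + R) := final
    _ = 2 * M * R := by ring
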